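/- E'_0 is generically ergodic: any E'_0-invariant subset of 2^ℕ with the Baire property is either meagre or comeagre. -/

import Mathlib

/-- Number of elements of `A` (as an element of `2^ℕ`) below `n`. -/
def cardBelow (n : ℕ) (A : ℕ → Bool) : ℕ :=
  ((Finset.range n).filter fun k => A k = true).card

/-- `E₀'` on `2^ℕ`: equal cardinality below some `n` and agreement from `n` on. -/
def E0' (A B : ℕ → Bool) : Prop :=
  ∃ n : ℕ, cardBelow n A = cardBelow n B ∧ ∀ k : ℕ, n ≤ k → A k = B k

namespace E0Aux

/-- The involution of `ℕ` swapping `i ↔ i + N` for `i < N`. -/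
def swapN (N : ℕ) (i : ℕ) : ℕ :=
  if i < N then i + N else if i < 2 * N then i - N else i

lemma swapN_invol (N i : ℕ) : swapN N (swapN N i) = i := by
  unfold swapN
  split_ifs <;> omega

lemma swapN_lt {N i : ℕ} (h : i < 2 * N) : swapN N i < 2 * N := by
  unfold swapN; split_ifs <;> omega

lemma swapN_ge {N i : ℕ} (h : 2 * N ≤ i) : swapN N i = i := by
  unfold swapN; split_ifs <;> omega

/-- Composing with `swapN` preserves `E0'`. -/
lemma e0'_swap (N : ℕ) (A : ℕ → Bool) : E0' A (fun i => A (swapN N i)) := by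
  refine ⟨2 * N, ?_, fun k hk => (congrArg A (swapN_ge hk)).symm⟩
  unfold cardBelow
  refine (Finset.card_bij' (fun k _ => swapN N k) (fun k _ => swapN N k) ?_ ?_ ?_ ?_).symm
  · intro a ha
    simp only [Finset.mem_filter, Finset.mem_range] at ha ⊢
    exact ⟨swapN_lt ha.1, ha.2⟩
  · intro a ha
    simp only [Finset.mem_filter, Finset.mem_range] at ha ⊢
    exact ⟨swapN_lt ha.1, by rw [swapN_invol]; exact ha.2⟩
  · intro a _; exact swapN_invol N a
  · intro a _; exact swapN_invol N a

lemma e0'_symm {A B : ℕ → Bool} (h : E0' A B) : E0' B A := by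
  obtain ⟨n, h1, h2⟩ := h
  exact ⟨n, h1.symm, fun k hk => (h2 k hk).symm⟩

/-- Cylinder: sequences agreeing with `x` below `n`. -/
def cyl (x : ℕ → Bool) (n : ℕ) : Set (ℕ → Bool) := {B | ∀ i, i < n → B i = x i}

lemma isOpen_cyl (x : ℕ → Bool) (n : ℕ) : IsOpen (cyl x n) := by
  have : cyl x n = ⋂ i ∈ Finset.range n, (fun B : ℕ → Bool => B i) ⁻¹' {x i} := by
    ext B
    simp [cyl]
  rw [this]
  exact isOpen_biInter_finset fun i _ =>
    ((continuous_apply i).isOpen_preimage _ (isOpen_discrete _))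

lemma self_mem_cyl (x : ℕ → Bool) (n : ℕ) : x ∈ cyl x n := fun _ _ => rfl

lemma cyl_mono (x : ℕ → Bool) {n m : ℕ} (h : n ≤ m) : cyl x m ⊆ cyl x n :=
  fun B hB i hi => hB i (lt_of_lt_of_le hi h)

lemma exists_cyl_subset {U : Set (ℕ → Bool)} (hU : IsOpen U) {x : ℕ → Bool} (hx : x ∈ U) :
    ∃ n, cyl x n ⊆ U := by
  obtain ⟨I, u, hu, hsub⟩ := isOpen_pi_iff.mp hU x hx
  refine ⟨I.sup id + 1, fun B hB => hsub ?_⟩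
  intro i hi
  have hlt : i < I.sup id + 1 := Nat.lt_succ_of_le (Finset.le_sup (f := id) hi)
  rw [hB i hlt]
  exact (hu i hi).2

/-- The swap homeomorphism of `2^ℕ`. -/
def swapHomeo (N : ℕ) : (ℕ → Bool) ≃ₜ (ℕ → Bool) where
  toFun A := fun i => A (swapN N i)
  invFun A := fun i => A (swapN N i)
  left_inv A := funext fun i => congrArg A (swapN_invol N i)
  right_inv A := funext fun i => congrArg A (swapN_invol N i)
  continuous_toFun := continuous_pi fun i => continuous_apply (swapN N i)
  continuous_invFun := continuous_pi fun i => continuous_apply (swapN N i)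

lemma isMeagre_union {X : Type*} [TopologicalSpace X] {s t : Set X}
    (hs : IsMeagre s) (ht : IsMeagre t) : IsMeagre (s ∪ t) := by
  rw [IsMeagre, Set.compl_union]
  exact Filter.inter_mem hs ht

/-- A nonempty open set in `2^ℕ` is not meagre. -/
lemma not_isMeagre_of_isOpen {U : Set (ℕ → Bool)} (hU : IsOpen U) (hne : U.Nonempty) :
    ¬ IsMeagre U := by
  intro h
  have hd : Dense Uᶜ := dense_of_mem_residual h
  obtain ⟨z, hz1, hz2⟩ := hd.inter_open_nonempty U hU hne
  exact hz2 hz1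

end E0Aux

open E0Aux

/-- `E₀'` is generically ergodic: every `E₀'`-invariant set with the Baire
property is meagre or comeagre. -/
theorem E0'_generically_ergodic (S : Set (ℕ → Bool))
    (hBP : BaireMeasurableSet S)
    (hinv : ∀ A B : ℕ → Bool, A ∈ S → E0' A B → B ∈ S) :
    IsMeagre S ∨ IsMeagre Sᶜ := by
  by_contra hcon
  push_neg at hcon
  obtain ⟨hS, hSc⟩ := hcon
  obtain ⟨U, hUo, hSU⟩ := hBP.residualEq_isOpen
  obtain ⟨V, hVo, hSV⟩ := hBP.compl.residualEq_isOpen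
  have hSUres : {z : ℕ → Bool | z ∈ S ↔ z ∈ U} ∈ residual _ :=
    Filter.eventuallyEq_set.mp hSU
  have hSVres : {z : ℕ → Bool | z ∈ Sᶜ ↔ z ∈ V} ∈ residual _ :=
    Filter.eventuallyEq_set.mp hSV
  -- meagre differences
  have hmU : IsMeagre (Sᶜ ∩ U) := by
    rw [IsMeagre]
    refine Filter.mem_of_superset hSUres fun z hz => ?_
    simp only [Set.mem_setOf_eq] at hz
    simp only [Set.mem_compl_iff, Set.mem_inter_iff, not_and, Set.mem_compl_iff] at *
    tauto
  have hmV : IsMeagre (S ∩ V) := by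
    rw [IsMeagre]
    refine Filter.mem_of_superset hSVres fun z hz => ?_
    simp only [Set.mem_setOf_eq, Set.mem_compl_iff] at hz
    simp only [Set.mem_compl_iff, Set.mem_inter_iff, not_and] at *
    tauto
  have hmU' : IsMeagre (S ∩ Uᶜ) := by
    rw [IsMeagre]
    refine Filter.mem_of_superset hSUres fun z hz => ?_
    simp only [Set.mem_setOf_eq] at hz
    simp only [Set.mem_compl_iff, Set.mem_inter_iff, not_and, Set.mem_compl_iff] at *
    tauto
  have hmV' : IsMeagre (Sᶜ ∩ Vᶜ) := by
    rw [IsMeagre]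
    refine Filter.mem_of_superset hSVres fun z hz => ?_
    simp only [Set.mem_setOf_eq, Set.mem_compl_iff] at hz
    simp only [Set.mem_compl_iff, Set.mem_inter_iff, not_and] at *
    tauto
  -- U and V are nonempty
  have hUne : U.Nonempty := by
    by_contra h
    rw [Set.not_nonempty_iff_eq_empty] at h
    refine hS (hmU'.mono fun z (hz : z ∈ S) => (⟨hz, ?_⟩ : z ∈ S ∩ Uᶜ))
    simp [h]
  have hVne : V.Nonempty := by
    by_contra h
    rw [Set.not_nonempty_iff_eq_empty] at h
    refine hSc (hmV'.mono fun z (hz : z ∈ Sᶜ) => (⟨hz, ?_⟩ : z ∈ Sᶜ ∩ Vᶜ))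
    simp [h]
  obtain ⟨x, hx⟩ := hUne
  obtain ⟨y, hy⟩ := hVne
  obtain ⟨n, hn⟩ := exists_cyl_subset hUo hx
  obtain ⟨m, hm⟩ := exists_cyl_subset hVo hy
  set N := max n m with hN
  have hxN : cyl x N ⊆ U := (cyl_mono x (le_max_left n m)).trans hn
  have hyN : cyl y N ⊆ V := (cyl_mono y (le_max_right n m)).trans hm
  -- the witness string w : y on [0,N), x on [N, ∞) shifted
  set w : ℕ → Bool := fun i => if i < N then y i else x (i - N) with hw
  set W : Set (ℕ → Bool) := cyl w (2 * N) with hW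
  have hWsub : W ⊆ cyl y N := fun B hB i hi => by
    rw [hB i (by omega)]
    simp [hw, hi]
  have hWswap : ∀ A ∈ W, (fun i => A (swapN N i)) ∈ cyl x N := by
    intro A hA i hi
    have h1 : swapN N i = i + N := by unfold swapN; split_ifs <;> omega
    have h2 : A (i + N) = w (i + N) := hA (i + N) (by omega)
    simp only [h1, h2, hw]
    have : ¬ (i + N < N) := by omega
    simp [this]
  -- S ∩ W is meagre
  have hm1 : IsMeagre (S ∩ W) :=
    hmV.mono fun z (hz : z ∈ S ∩ W) => (⟨hz.1, hyN (hWsub hz.2)⟩ : z ∈ S ∩ V)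
  -- Sᶜ ∩ W is meagre, via the swap homeomorphism
  have hm2 : IsMeagre (Sᶜ ∩ W) := by
    have hpre : IsMeagre ((swapHomeo N) ⁻¹' (Sᶜ ∩ U)) :=
      hmU.preimage_of_isOpenMap (swapHomeo N).continuous (swapHomeo N).isOpenMap
    refine hpre.mono fun A hA => ?_
    have hAW : A ∈ W := hA.2
    have hcylx : (fun i => A (swapN N i)) ∈ cyl x N := hWswap A hAW
    constructor
    · -- swapHomeo N A ∈ Sᶜ
      intro hmem
      exact hA.1 (hinv _ A hmem (e0'_symm (e0'_swap N A)))
    · exact hxN hcylx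
  have hWm : IsMeagre W := by
    have : W ⊆ (S ∩ W) ∪ (Sᶜ ∩ W) := by
      intro z hz
      by_cases hzS : z ∈ S
      · exact Or.inl ⟨hzS, hz⟩
      · exact Or.inr ⟨hzS, hz⟩
    exact (isMeagre_union hm1 hm2).mono this
  exact E0Aux.not_isMeagre_of_isOpen (isOpen_cyl w (2 * N)) ⟨w, self_mem_cyl w (2 * N)⟩ hWm
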